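/- arXiv:1212.2247 — 3 statements merged into one kernel-verified Lean document; each statement's English description precedes it below -/
import Mathlib

section
/- Let p > 1 and t > 0, and let f ∈ L^p(ℝ) vanish a.e. outside an interval [a,b]. Let a′ < a ≤ b < b′ and c := min(a − a′, b′ − b) > 0. Then ∫_{ℝ∖[a′,b′]} (∫_{|h| ≥ c} |f(x+h)| |h|^{−1−t} dh)^p dx ≤ (2/(p + pt − 1)) (b−a)^{p−1} c^{1−p−pt} ‖f‖_{L^p(ℝ)}^p. -/
open MeasureTheory
open scoped ENNReal

/-- Tail estimate for the nonlocal operator `D_t`: if `f ∈ L^p(ℝ)`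
vanishes a.e. outside `[a,b]`, `a' < a ≤ b < b'` and `c = min(a−a', b'−b)`, then
`∫_{ℝ∖[a',b']} (∫_{|h|≥c} |f(x+h)| |h|^{−1−t} dh)^p dx
  ≤ (2/(p+pt−1)) (b−a)^{p−1} c^{1−p−pt} ‖f‖_p^p`. -/
theorem stmt15 (p t : ℝ) (hp : 1 < p) (ht : 0 < t)
    (a b a' b' : ℝ) (ha : a' < a) (hab : a ≤ b) (hb : b < b')
    (c : ℝ) (hc : c = min (a - a') (b' - b))
    (f : ℝ → ℝ) (hf : MemLp f (ENNReal.ofReal p) volume)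
    (hsupp : ∀ᵐ x ∂volume, x ∉ Set.Icc a b → f x = 0) :
    (∫⁻ x in (Set.Icc a' b')ᶜ,
        (∫⁻ h in {h : ℝ | c ≤ |h|},
            ENNReal.ofReal (|f (x + h)| * |h| ^ (-(1 + t)))) ^ p)
      ≤ ENNReal.ofReal (2 / (p + p * t - 1) * (b - a) ^ (p - 1) * c ^ (1 - p - p * t)) *
        ∫⁻ x : ℝ, ENNReal.ofReal |f x| ^ p := by
  have hc0 : 0 < c := by rw [hc]; exact lt_min (by linarith) (by linarith)
  have hba : (0:ℝ) ≤ b - a := by linarith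
  have hp0 : 0 < p := by linarith
  set s : ℝ := p * (1 + t) with hs
  have hs1 : 1 < s := by nlinarith
  have hpq : p.HolderConjugate (Real.conjExponent p) := Real.HolderConjugate.conjExponent hp
  set q : ℝ := Real.conjExponent p with hq
  have habs : Measurable fun x : ℝ => |x| := continuous_abs.measurable
  -- measurable representative
  obtain ⟨g, hgm, hfg⟩ : ∃ g : ℝ → ℝ, Measurable g ∧ f =ᵐ[volume] g :=
    ⟨hf.aestronglyMeasurable.mk f, hf.aestronglyMeasurable.stronglyMeasurable_mk.measurable,
      hf.aestronglyMeasurable.ae_eq_mk⟩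
  have hsuppg : ∀ᵐ y ∂(volume : Measure ℝ), y ∉ Set.Icc a b → g y = 0 := by
    filter_upwards [hsupp, hfg] with y h1 h2 h3
    rw [← h2]; exact h1 h3
  set S : Set ℝ := {h : ℝ | c ≤ |h|} with hSdef
  have hSm : MeasurableSet S := measurableSet_le measurable_const habs
  -- replace f by g in the inner integral
  have hinner : ∀ x : ℝ,
      (∫⁻ h in S, ENNReal.ofReal (|f (x + h)| * |h| ^ (-(1 + t))))
        = ∫⁻ h in S, ENNReal.ofReal (|g (x + h)| * |h| ^ (-(1 + t))) := by
    intro x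
    refine lintegral_congr_ae (ae_restrict_of_ae ?_)
    have htr := hfg.comp_tendsto
      (measurePreserving_add_left volume x).quasiMeasurePreserving.tendsto_ae
    filter_upwards [htr] with h hh
    simp only [Function.comp_apply] at hh
    rw [hh]
  have hWm : Measurable fun h : ℝ => ENNReal.ofReal (|h| ^ (-s)) :=
    (habs.pow_const (-s)).ennreal_ofReal
  -- key pointwise Hölder estimate
  have key : ∀ x : ℝ,
      (∫⁻ h in S, ENNReal.ofReal (|g (x + h)| * |h| ^ (-(1 + t)))) ^ p
        ≤ ENNReal.ofReal ((b - a) ^ (p - 1)) *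
          ∫⁻ h in S, ENNReal.ofReal (|g (x + h)| ^ p) * ENNReal.ofReal (|h| ^ (-s)) := by
    intro x
    have hgxm : Measurable fun h : ℝ => g (x + h) := hgm.comp (measurable_const_add x)
    set T : Set ℝ := (fun h : ℝ => g (x + h)) ⁻¹' ({0}ᶜ) with hTdef
    have hTm : MeasurableSet T := hgxm (measurableSet_singleton 0).compl
    have hTvol : volume T ≤ ENNReal.ofReal (b - a) := by
      have hae : ∀ᵐ h : ℝ, (x + h) ∉ Set.Icc a b → g (x + h) = 0 :=
        (measurePreserving_add_left volume x).quasiMeasurePreserving.tendsto_ae.eventually hsuppg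
      have hsub : T ≤ᵐ[volume] Set.Icc (a - x) (b - x) := by
        filter_upwards [hae] with h hh hmem
        simp only [hTdef, Set.mem_preimage, Set.mem_compl_iff, Set.mem_singleton_iff] at hmem
        have hcc : x + h ∈ Set.Icc a b := by
          by_contra hxy
          exact hmem (hh hxy)
        rw [Set.mem_Icc] at hcc
        exact Set.mem_Icc.mpr ⟨by linarith [hcc.1], by linarith [hcc.2]⟩
      calc volume T ≤ volume (Set.Icc (a - x) (b - x)) := measure_mono_ae hsub
        _ = ENNReal.ofReal (b - x - (a - x)) := Real.volume_Icc
        _ = ENNReal.ofReal (b - a) := by norm_num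
    set u : ℝ → ℝ≥0∞ :=
      fun h => ENNReal.ofReal |g (x + h)| * ENNReal.ofReal (|h| ^ (-(1 + t))) with hu
    set v : ℝ → ℝ≥0∞ := T.indicator 1 with hv
    have hum : Measurable u :=
      (hgxm.abs.ennreal_ofReal).mul ((habs.pow_const (-(1 + t))).ennreal_ofReal)
    have hvm : Measurable v := measurable_one.indicator hTm
    have step1 : (∫⁻ h in S, ENNReal.ofReal (|g (x + h)| * |h| ^ (-(1 + t))))
        = ∫⁻ h in S, (u * v) h := by
      refine lintegral_congr fun h => ?_
      simp only [Pi.mul_apply, hu, hv]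
      by_cases hh : g (x + h) = 0
      · simp [hh]
      · rw [Set.indicator_of_mem (by simpa [hTdef] using hh), Pi.one_apply, mul_one,
          ENNReal.ofReal_mul (abs_nonneg _)]
    have holder := ENNReal.lintegral_mul_le_Lp_mul_Lq (volume.restrict S) hpq
      hum.aemeasurable hvm.aemeasurable
    have hvq : (∫⁻ h in S, v h ^ q) ≤ ENNReal.ofReal (b - a) := by
      have hvpow : ∀ h : ℝ, v h ^ q = v h := by
        intro h
        by_cases hh : h ∈ T
        · rw [hv, Set.indicator_of_mem hh]
          simp
        · rw [hv, Set.indicator_of_notMem hh]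
          exact ENNReal.zero_rpow_of_pos hpq.symm.pos
      rw [lintegral_congr hvpow, hv, lintegral_indicator_one hTm, Measure.restrict_apply hTm]
      exact le_trans (measure_mono Set.inter_subset_left) hTvol
    have hup : ∀ h : ℝ, u h ^ p
        = ENNReal.ofReal (|g (x + h)| ^ p) * ENNReal.ofReal (|h| ^ (-s)) := by
      intro h
      have hexp : (|h| ^ (-(1 + t))) ^ p = |h| ^ (-s) := by
        rw [← Real.rpow_mul (abs_nonneg h)]
        congr 1
        rw [hs]; ring
      rw [hu, ENNReal.mul_rpow_of_nonneg _ _ hp0.le,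
        ENNReal.ofReal_rpow_of_nonneg (abs_nonneg _) hp0.le,
        ENNReal.ofReal_rpow_of_nonneg (Real.rpow_nonneg (abs_nonneg _) _) hp0.le, hexp]
    have h1q : 1 / q * p = p - 1 := by
      rw [div_mul_eq_mul_div, one_mul]
      exact hpq.div_conj_eq_sub_one
    calc (∫⁻ h in S, ENNReal.ofReal (|g (x + h)| * |h| ^ (-(1 + t)))) ^ p
        = (∫⁻ h in S, (u * v) h) ^ p := by rw [step1]
      _ ≤ ((∫⁻ h in S, u h ^ p) ^ (1 / p) * (∫⁻ h in S, v h ^ q) ^ (1 / q)) ^ p :=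
          ENNReal.rpow_le_rpow holder hp0.le
      _ = (∫⁻ h in S, u h ^ p) * ((∫⁻ h in S, v h ^ q) ^ (p - 1)) := by
          rw [ENNReal.mul_rpow_of_nonneg _ _ hp0.le, ← ENNReal.rpow_mul, ← ENNReal.rpow_mul,
            h1q, one_div, inv_mul_cancel₀ hp0.ne', ENNReal.rpow_one]
      _ ≤ (∫⁻ h in S, u h ^ p) * (ENNReal.ofReal (b - a)) ^ (p - 1) :=
          mul_le_mul_right (ENNReal.rpow_le_rpow hvq (by linarith)) _
      _ = ENNReal.ofReal ((b - a) ^ (p - 1)) *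
            ∫⁻ h in S, ENNReal.ofReal (|g (x + h)| ^ p) * ENNReal.ofReal (|h| ^ (-s)) := by
          rw [ENNReal.ofReal_rpow_of_nonneg hba (by linarith), lintegral_congr hup, mul_comm]
  -- Fubini and translation invariance
  set K : ℝ≥0∞ := ∫⁻ y : ℝ, ENNReal.ofReal (|g y| ^ p) with hK
  have hFm : Measurable fun z : ℝ × ℝ =>
      ENNReal.ofReal (|g (z.1 + z.2)| ^ p) * ENNReal.ofReal (|z.2| ^ (-s)) :=
    (((hgm.comp measurable_add).abs.pow_const p).ennreal_ofReal).mul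
      ((measurable_snd.abs.pow_const (-s)).ennreal_ofReal)
  have hswap : (∫⁻ x : ℝ, ∫⁻ h in S,
        ENNReal.ofReal (|g (x + h)| ^ p) * ENNReal.ofReal (|h| ^ (-s)))
      = (∫⁻ h in S, ENNReal.ofReal (|h| ^ (-s))) * K := by
    rw [lintegral_lintegral_swap hFm.aemeasurable]
    have hinner2 : ∀ h : ℝ,
        (∫⁻ x : ℝ, ENNReal.ofReal (|g (x + h)| ^ p) * ENNReal.ofReal (|h| ^ (-s)))
          = ENNReal.ofReal (|h| ^ (-s)) * K := by
      intro h
      have hm1 : Measurable fun x : ℝ => ENNReal.ofReal (|g (x + h)| ^ p) := by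
        exact ((hgm.comp (measurable_add_const h)).abs.pow_const p).ennreal_ofReal
      rw [lintegral_mul_const _ hm1,
        lintegral_add_right_eq_self (fun y => ENNReal.ofReal (|g y| ^ p)) h, ← hK, mul_comm]
    rw [lintegral_congr hinner2, lintegral_mul_const _ hWm]
  -- evaluation of the tail integral
  have hnn : (0:ℝ) ≤ c ^ (1 - s) / (s - 1) :=
    div_nonneg (Real.rpow_nonneg hc0.le _) (by linarith)
  have hMeval : (∫⁻ h in S, ENNReal.ofReal (|h| ^ (-s)))
      = ENNReal.ofReal (c ^ (1 - s) / (s - 1)) + ENNReal.ofReal (c ^ (1 - s) / (s - 1)) := by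
    have hSeq : S = Set.Iic (-c) ∪ Set.Ici c := by
      ext h
      simp only [hSdef, Set.mem_setOf_eq, Set.mem_union, Set.mem_Iic, Set.mem_Ici, le_abs]
      constructor
      · rintro (h1 | h2)
        · right; exact h1
        · left; linarith
      · rintro (h1 | h2)
        · right; linarith
        · left; exact h2
    have hIci : (∫⁻ h in Set.Ici c, ENNReal.ofReal (|h| ^ (-s)))
        = ENNReal.ofReal (c ^ (1 - s) / (s - 1)) := by
      have h1 : (∫⁻ h in Set.Ici c, ENNReal.ofReal (|h| ^ (-s)))
          = ∫⁻ h in Set.Ici c, ENNReal.ofReal (h ^ (-s)) := by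
        refine setLIntegral_congr_fun measurableSet_Ici (fun h hh => ?_)
        rw [abs_of_pos (lt_of_lt_of_le hc0 hh)]
      have hint : IntegrableOn (fun h : ℝ => h ^ (-s)) (Set.Ici c) volume :=
        (integrableOn_Ici_iff_integrableOn_Ioi).mpr
          (integrableOn_Ioi_rpow_of_lt (by linarith) hc0)
      have hpos : 0 ≤ᵐ[volume.restrict (Set.Ici c)] fun h : ℝ => h ^ (-s) := by
        refine (ae_restrict_iff' measurableSet_Ici).mpr (ae_of_all _ fun h hh => ?_)
        exact Real.rpow_nonneg (le_trans hc0.le hh) _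
      have hval : (∫ h in Set.Ici c, h ^ (-s)) = c ^ (1 - s) / (s - 1) := by
        rw [MeasureTheory.integral_Ici_eq_integral_Ioi,
          integral_Ioi_rpow_of_lt (by linarith) hc0, show -s + 1 = 1 - s by ring]
        rw [div_eq_div_iff (ne_of_lt (by linarith)) (ne_of_gt (by linarith))]
        ring
      rw [h1, ← ofReal_integral_eq_lintegral_ofReal hint hpos, hval]
    have hIic : (∫⁻ h in Set.Iic (-c), ENNReal.ofReal (|h| ^ (-s)))
        = ∫⁻ h in Set.Ici c, ENNReal.ofReal (|h| ^ (-s)) := by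
      have hneg := (Measure.measurePreserving_neg (volume : Measure ℝ)).setLIntegral_comp_preimage_emb
        (MeasurableEquiv.neg ℝ).measurableEmbedding
        (fun h : ℝ => ENNReal.ofReal (|h| ^ (-s))) (Set.Iic (-c))
      have hpre : ((Neg.neg : ℝ → ℝ) ⁻¹' Set.Iic (-c)) = Set.Ici c := by
        ext h
        simp only [Set.mem_preimage, Set.mem_Iic, Set.mem_Ici]
        constructor <;> intro <;> linarith
      rw [← hneg, hpre]
      exact lintegral_congr fun h => by rw [abs_neg]
    have hdisj : Disjoint (Set.Iic (-c)) (Set.Ici c) :=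
      Set.Iic_disjoint_Ici.mpr (not_le.mpr (by linarith))
    rw [hSeq, lintegral_union measurableSet_Ici hdisj, hIic, hIci]
  -- final assembly
  have hKeq : K = ∫⁻ x : ℝ, ENNReal.ofReal |f x| ^ p := by
    rw [hK]
    refine lintegral_congr_ae ?_
    filter_upwards [hfg] with x hx
    rw [hx, ENNReal.ofReal_rpow_of_nonneg (abs_nonneg _) hp0.le]
  calc (∫⁻ x in (Set.Icc a' b')ᶜ,
        (∫⁻ h in S, ENNReal.ofReal (|f (x + h)| * |h| ^ (-(1 + t)))) ^ p)
      = ∫⁻ x in (Set.Icc a' b')ᶜ,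
          (∫⁻ h in S, ENNReal.ofReal (|g (x + h)| * |h| ^ (-(1 + t)))) ^ p := by
        exact lintegral_congr fun x => by rw [hinner x]
    _ ≤ ∫⁻ x : ℝ, (∫⁻ h in S, ENNReal.ofReal (|g (x + h)| * |h| ^ (-(1 + t)))) ^ p :=
        setLIntegral_le_lintegral _ _
    _ ≤ ∫⁻ x : ℝ, ENNReal.ofReal ((b - a) ^ (p - 1)) *
          ∫⁻ h in S, ENNReal.ofReal (|g (x + h)| ^ p) * ENNReal.ofReal (|h| ^ (-s)) :=
        lintegral_mono key
    _ = ENNReal.ofReal ((b - a) ^ (p - 1)) * (∫⁻ x : ℝ,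
          ∫⁻ h in S, ENNReal.ofReal (|g (x + h)| ^ p) * ENNReal.ofReal (|h| ^ (-s))) :=
        lintegral_const_mul' _ _ ENNReal.ofReal_ne_top
    _ = ENNReal.ofReal ((b - a) ^ (p - 1)) *
          ((∫⁻ h in S, ENNReal.ofReal (|h| ^ (-s))) * K) := by rw [hswap]
    _ = ENNReal.ofReal (2 / (p + p * t - 1) * (b - a) ^ (p - 1) * c ^ (1 - p - p * t)) * K := by
        rw [hMeval, ← ENNReal.ofReal_add hnn hnn, ← mul_assoc,
          ← ENNReal.ofReal_mul (Real.rpow_nonneg hba _)]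
        congr 2
        have h1 : 1 - s = 1 - p - p * t := by rw [hs]; ring
        have h2 : s - 1 = p + p * t - 1 := by rw [hs]; ring
        rw [← h1, ← h2]
        have hs1' : s - 1 ≠ 0 := ne_of_gt (by linarith)
        field_simp
        ring
    _ = ENNReal.ofReal (2 / (p + p * t - 1) * (b - a) ^ (p - 1) * c ^ (1 - p - p * t)) *
          ∫⁻ x : ℝ, ENNReal.ofReal |f x| ^ p := by rw [hKeq]
end

section
/- Let p > 1 and 0 < t < 1/p. There exists a constant C, depending only on p and t, such that for every interval J ⊆ [0,1] of positive length, the function D(x) := ∫_ℝ (1_J(x+y) − 1_J(x)) |y|^{−1−t} dy is defined by an absolutely convergent integral for every x not an endpoint of J, and ‖1_J‖_{L^p(ℝ)} + ‖D‖_{L^p(ℝ)} ≤ C (length of J)^{1/p − t}. -/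
open MeasureTheory
open scoped ENNReal

section helpers
open MeasureTheory Set Real

lemma integrable_comp_abs' {f : ℝ → ℝ} (hf : IntegrableOn (fun x => f |x|) (Ioi (0:ℝ))) :
    Integrable (fun x => f |x|) := by
  have int_Iic : IntegrableOn (fun x ↦ f |x|) (Iic 0) := by
    rw [← Measure.map_neg_eq_self (volume : Measure ℝ)]
    have m : MeasurableEmbedding fun x : ℝ => -x := (Homeomorph.neg ℝ).measurableEmbedding
    rw [m.integrableOn_map_iff]
    simp_rw [Function.comp_def, abs_neg, neg_preimage, neg_Iic, neg_zero]
    exact Iff.mpr integrableOn_Ici_iff_integrableOn_Ioi hf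
  have h := int_Iic.union hf
  rwa [Iic_union_Ioi, integrableOn_univ] at h

-- near piece
lemma phiN_eq (s a : ℝ) (x : ℝ) :
    (Icc (-a) a).indicator (fun y : ℝ => |y| ^ s) x
      = (Icc 0 a).indicator (fun y : ℝ => y ^ s) |x| := by
  by_cases h : |x| ≤ a
  · rw [indicator_of_mem (mem_Icc.mpr (abs_le.mp h)), indicator_of_mem (mem_Icc.mpr ⟨abs_nonneg x, h⟩)]
  · rw [indicator_of_notMem, indicator_of_notMem]
    · exact fun hc => h (mem_Icc.mp hc).2
    · exact fun hc => h (abs_le.mpr (mem_Icc.mp hc))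

lemma integrable_phiN {s a : ℝ} (hs : -1 < s) (ha : 0 < a) :
    Integrable ((Icc (-a) a).indicator (fun y : ℝ => |y| ^ s)) := by
  simp_rw [funext (phiN_eq s a)]
  apply integrable_comp_abs'
  have h1 : IntegrableOn (fun y : ℝ => y ^ s) (Ioc 0 a) := by
    have := intervalIntegral.intervalIntegrable_rpow' (a := 0) (b := a) hs
    rwa [intervalIntegrable_iff, uIoc_of_le ha.le] at this
  have : IntegrableOn ((Icc 0 a).indicator (fun y : ℝ => y ^ s)) (Ioi (0:ℝ)) := by
    rw [IntegrableOn, integrable_indicator_iff measurableSet_Icc, IntegrableOn,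
      Measure.restrict_restrict measurableSet_Icc]
    refine h1.mono_set ?_
    intro y hy
    exact ⟨hy.2, hy.1.2⟩
  exact this.congr_fun (fun y hy => by rw [abs_of_pos hy]) measurableSet_Ioi

lemma integral_phiN {s a : ℝ} (hs : -1 < s) (ha : 0 < a) :
    ∫ x, (Icc (-a) a).indicator (fun y : ℝ => |y| ^ s) x = 2 * a ^ (s + 1) / (s + 1) := by
  simp_rw [funext (phiN_eq s a)]
  rw [integral_comp_abs (f := (Icc 0 a).indicator (fun y : ℝ => y ^ s))]
  rw [setIntegral_indicator measurableSet_Icc]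
  have : Ioi 0 ∩ Icc 0 a = Ioc 0 a := by
    ext y; simp only [mem_inter_iff, mem_Ioi, mem_Icc, mem_Ioc]
    constructor
    · rintro ⟨h1, _, h3⟩; exact ⟨h1, h3⟩
    · rintro ⟨h1, h2⟩; exact ⟨h1, h1.le, h2⟩
  rw [this, ← intervalIntegral.integral_of_le ha.le, integral_rpow (Or.inl hs)]
  rw [Real.zero_rpow (by linarith)]
  ring

lemma phiF_eq (s a : ℝ) (x : ℝ) :
    {y : ℝ | a ≤ |y|}.indicator (fun y : ℝ => |y| ^ s) x
      = (Ici a).indicator (fun y : ℝ => y ^ s) |x| := by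
  by_cases h : a ≤ |x| <;> simp [Set.indicator_apply, h]

lemma measurableSet_far (a : ℝ) : MeasurableSet {y : ℝ | a ≤ |y|} :=
  measurableSet_le measurable_const measurable_abs

lemma integrable_phiF {s a : ℝ} (hs : s < -1) (ha : 0 < a) :
    Integrable ({y : ℝ | a ≤ |y|}.indicator (fun y : ℝ => |y| ^ s)) := by
  simp_rw [funext (phiF_eq s a)]
  apply integrable_comp_abs'
  have h1 : IntegrableOn (fun y : ℝ => y ^ s) (Ioi a) := integrableOn_Ioi_rpow_of_lt hs ha
  have h2 : IntegrableOn (fun y : ℝ => y ^ s) (Ici a) :=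
    Iff.mpr integrableOn_Ici_iff_integrableOn_Ioi h1
  have : IntegrableOn ((Ici a).indicator (fun y : ℝ => y ^ s)) (Ioi (0:ℝ)) := by
    rw [IntegrableOn, integrable_indicator_iff measurableSet_Ici, IntegrableOn,
      Measure.restrict_restrict measurableSet_Ici]
    exact h2.mono_set (fun y hy => hy.1)
  exact this.congr_fun (fun y hy => by rw [abs_of_pos hy]) measurableSet_Ioi

lemma integral_phiF {s a : ℝ} (hs : s < -1) (ha : 0 < a) :
    ∫ x, {y : ℝ | a ≤ |y|}.indicator (fun y : ℝ => |y| ^ s) x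
      = 2 * (-(a ^ (s + 1)) / (s + 1)) := by
  simp_rw [funext (phiF_eq s a)]
  rw [integral_comp_abs (f := (Ici a).indicator (fun y : ℝ => y ^ s))]
  rw [setIntegral_indicator measurableSet_Ici]
  have h3 : Ioi 0 ∩ Ici a = Ici a := inter_eq_right.mpr (fun y hy => lt_of_lt_of_le ha hy)
  rw [h3, integral_Ici_eq_integral_Ioi, integral_Ioi_rpow_of_lt hs ha]

section pointwise
variable {u v t x : ℝ}

private noncomputable def ind (u v : ℝ) : ℝ → ℝ := (Icc u v).indicator (fun _ => (1:ℝ))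

lemma ind01 (u v z : ℝ) : 0 ≤ ind u v z ∧ ind u v z ≤ 1 := by
  by_cases h : z ∈ Icc u v <;> simp [ind, indicator_apply, h]

lemma key_eq (hx_u : x ≠ u) (hx_v : x ≠ v) {y : ℝ} (hy : |y| < min |x - u| |x - v|) :
    ind u v (x + y) = ind u v x := by
  have hyu : |y| < |x - u| := lt_of_lt_of_le hy (min_le_left _ _)
  have hyv : |y| < |x - v| := lt_of_lt_of_le hy (min_le_right _ _)
  have hy1 := (abs_lt.mp hyu)
  have hy2 := (abs_lt.mp hyv)
  by_cases hx : x ∈ Icc u v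
  · rw [mem_Icc] at hx
    have hu : u < x := lt_of_le_of_ne hx.1 (Ne.symm hx_u)
    have hv : x < v := lt_of_le_of_ne hx.2 hx_v
    have hxu : |x - u| = x - u := abs_of_pos (by linarith)
    have hxv : |x - v| = v - x := by rw [abs_sub_comm]; exact abs_of_pos (by linarith)
    rw [hxu] at hy1; rw [hxv] at hy2
    have hmem : x + y ∈ Icc u v := mem_Icc.mpr ⟨by linarith, by linarith⟩
    rw [ind, indicator_of_mem hmem, indicator_of_mem (mem_Icc.mpr ⟨hx.1, hx.2⟩)]
  · rw [mem_Icc, not_and_or, not_le, not_le] at hx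
    have hmem : x + y ∉ Icc u v := by
      rcases hx with h | h
      · have hxu : |x - u| = u - x := by rw [abs_sub_comm]; exact abs_of_pos (by linarith)
        rw [hxu] at hy1
        intro hc; rw [mem_Icc] at hc; linarith [hc.1]
      · have hxv : |x - v| = x - v := abs_of_pos (by linarith)
        rw [hxv] at hy2
        intro hc; rw [mem_Icc] at hc; linarith [hc.2]
    rw [ind, indicator_of_notMem hmem, indicator_of_notMem (by
      rw [mem_Icc, not_and_or, not_le, not_le]; exact hx)]

lemma hx_le (hx_u : x ≠ u) (hx_v : x ≠ v) (ht : 0 < t) (y : ℝ) :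
    |(ind u v (x + y) - ind u v x) * |y| ^ (-(1 + t))|
      ≤ {y : ℝ | min |x - u| |x - v| ≤ |y|}.indicator (fun y => |y| ^ (-(1 + t))) y := by
  by_cases hy : min |x - u| |x - v| ≤ |y|
  · rw [Set.indicator_apply, if_pos (show y ∈ {y : ℝ | min |x - u| |x - v| ≤ |y|} from hy)]
    rw [abs_mul]
    have h2 : (0:ℝ) ≤ |y| ^ (-(1 + t)) := rpow_nonneg (abs_nonneg y) _
    rw [abs_of_nonneg h2]
    have h3 : |ind u v (x + y) - ind u v x| ≤ 1 := by
      have a1 := ind01 u v (x + y); have a2 := ind01 u v x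
      rw [abs_sub_le_iff]; constructor <;> linarith [a1.1, a1.2, a2.1, a2.2]
    calc |ind u v (x + y) - ind u v x| * |y| ^ (-(1 + t))
        ≤ 1 * |y| ^ (-(1 + t)) := mul_le_mul_of_nonneg_right h3 h2
      _ = |y| ^ (-(1 + t)) := one_mul _
  · rw [Set.indicator_apply, if_neg (show y ∉ {y : ℝ | min |x - u| |x - v| ≤ |y|} from hy)]
    push_neg at hy
    rw [key_eq hx_u hx_v hy]
    simp

lemma delta_pos (hx_u : x ≠ u) (hx_v : x ≠ v) : 0 < min |x - u| |x - v| :=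
  lt_min (abs_pos.mpr (sub_ne_zero.mpr hx_u)) (abs_pos.mpr (sub_ne_zero.mpr hx_v))

lemma integrable_hx (hx_u : x ≠ u) (hx_v : x ≠ v) (ht : 0 < t) :
    Integrable (fun y : ℝ => (ind u v (x + y) - ind u v x) * |y| ^ (-(1 + t))) := by
  refine Integrable.mono' (integrable_phiF (by linarith : -(1+t) < -1) (delta_pos hx_u hx_v))
    ?_ (ae_of_all _ (fun y => by rw [Real.norm_eq_abs]; exact hx_le hx_u hx_v ht y))
  have m1 : Measurable (fun y : ℝ => ind u v (x + y)) :=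
    (measurable_const.indicator measurableSet_Icc).comp (measurable_const.add measurable_id)
  have m2 : Measurable (fun y : ℝ => |y| ^ (-(1 + t))) := by fun_prop
  exact ((m1.sub measurable_const).mul m2).aestronglyMeasurable

lemma absD_le_near (hx_u : x ≠ u) (hx_v : x ≠ v) (ht : 0 < t) :
    |∫ y : ℝ, (ind u v (x + y) - ind u v x) * |y| ^ (-(1 + t))|
      ≤ (2 / t) * (min |x - u| |x - v|) ^ (-t) := by
  have hδ := delta_pos hx_u hx_v
  have h1 := norm_integral_le_of_norm_le (integrable_phiF (by linarith : -(1+t) < -1) hδ)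
    (ae_of_all _ (fun y => by rw [Real.norm_eq_abs]; exact hx_le hx_u hx_v ht y))
  rw [Real.norm_eq_abs] at h1
  refine h1.trans (le_of_eq ?_)
  rw [integral_phiF (by linarith : -(1+t) < -1) hδ]
  have he : -(1 + t) + 1 = -t := by ring
  rw [he]
  field_simp
end pointwise

section far
variable {u v t x : ℝ}

lemma absD_le_far (huv : u < v) (hx : x < u ∨ v < x) (ht : 0 < t) :
    |∫ y : ℝ, (ind u v (x + y) - ind u v x) * |y| ^ (-(1 + t))|
      ≤ (v - u) * (min |x - u| |x - v|) ^ (-(1 + t)) := by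
  have hx_u : x ≠ u := by rcases hx with h | h <;> intro hc <;> subst hc <;> linarith
  have hx_v : x ≠ v := by rcases hx with h | h <;> intro hc <;> subst hc <;> linarith
  have hδ := delta_pos hx_u hx_v
  set δ := min |x - u| |x - v| with hδdef
  have hindx : ind u v x = 0 := by
    apply indicator_of_notMem
    rw [mem_Icc, not_and_or, not_le, not_le]
    rcases hx with h | h
    · exact Or.inl h
    · exact Or.inr h
  have hgint : Integrable ((Icc (u - x) (v - x)).indicator (fun _ : ℝ => δ ^ (-(1 + t)))) := by
    rw [integrable_indicator_iff measurableSet_Icc]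
    exact integrableOn_const measure_Icc_lt_top.ne
  have hptw : ∀ y : ℝ, ‖(ind u v (x + y) - ind u v x) * |y| ^ (-(1 + t))‖
      ≤ (Icc (u - x) (v - x)).indicator (fun _ : ℝ => δ ^ (-(1 + t))) y := by
    intro y
    rw [hindx, sub_zero, Real.norm_eq_abs, abs_mul,
      abs_of_nonneg (rpow_nonneg (abs_nonneg y) _)]
    by_cases hxy : x + y ∈ Icc u v
    · have hymem : y ∈ Icc (u - x) (v - x) := by
        rw [mem_Icc] at hxy ⊢; constructor <;> linarith [hxy.1, hxy.2]
      rw [Set.indicator_apply, if_pos hymem, ind, indicator_of_mem hxy, abs_one, one_mul]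
      have hδy : δ ≤ |y| := by
        rw [mem_Icc] at hxy
        rcases hx with h | h
        · have h1 : δ ≤ |x - u| := min_le_left _ _
          have h2 : |x - u| = u - x := by rw [abs_sub_comm]; exact abs_of_pos (by linarith)
          have h3 : u - x ≤ y := by linarith [hxy.1]
          calc δ ≤ u - x := by rw [← h2]; exact h1
            _ ≤ y := h3
            _ ≤ |y| := le_abs_self y
        · have h1 : δ ≤ |x - v| := min_le_right _ _
          have h2 : |x - v| = x - v := abs_of_pos (by linarith)
          have h3 : x - v ≤ -y := by linarith [hxy.2]
          calc δ ≤ x - v := by rw [← h2]; exact h1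
            _ ≤ -y := h3
            _ ≤ |y| := neg_le_abs y
      exact Real.rpow_le_rpow_of_nonpos hδ hδy (by linarith)
    · rw [ind, indicator_of_notMem hxy, abs_zero, zero_mul]
      exact indicator_nonneg (fun _ _ => rpow_nonneg hδ.le _) y
  have h1 := norm_integral_le_of_norm_le hgint (ae_of_all _ hptw)
  rw [Real.norm_eq_abs] at h1
  refine h1.trans (le_of_eq ?_)
  rw [integral_indicator measurableSet_Icc, setIntegral_const,
    Real.volume_real_Icc_of_le (by linarith : u - x ≤ v - x), smul_eq_mul]
  ring_nf
end far

section G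
variable {p t u v : ℝ}

noncomputable def Gfun (p t u v : ℝ) : ℝ → ℝ := fun x =>
  (2/t)^p * ((Icc (-(3*(v-u))) (3*(v-u))).indicator (fun z : ℝ => |z| ^ (-(t*p))) (x - u)
          + (Icc (-(3*(v-u))) (3*(v-u))).indicator (fun z : ℝ => |z| ^ (-(t*p))) (x - v))
  + (2^(1+t)*(v-u))^p *
      ({z : ℝ | 2*(v-u) ≤ |z|}.indicator (fun z : ℝ => |z| ^ (-((1+t)*p))) (x - u))

lemma exp1 (hp : 1 < p) (ht0 : 0 < t) (htp : t < 1/p) : -1 < -(t*p) := by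
  have hp0 : 0 < p := by linarith
  have : t * p < 1 := by
    calc t * p < (1/p) * p := mul_lt_mul_of_pos_right htp hp0
      _ = 1 := one_div_mul_cancel hp0.ne'
  linarith

lemma exp2 (hp : 1 < p) (ht0 : 0 < t) : -((1+t)*p) < -1 := by nlinarith

lemma integrable_G (hp : 1 < p) (ht0 : 0 < t) (htp : t < 1/p) (huv : u < v) :
    Integrable (Gfun p t u v) := by
  have hl : 0 < v - u := by linarith
  have h1 := exp1 hp ht0 htp
  have h2 := exp2 hp ht0
  have hA : Integrable ((Icc (-(3*(v-u))) (3*(v-u))).indicator (fun z : ℝ => |z| ^ (-(t*p)))) :=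
    integrable_phiN h1 (by linarith)
  have hB : Integrable ({z : ℝ | 2*(v-u) ≤ |z|}.indicator (fun z : ℝ => |z| ^ (-((1+t)*p)))) :=
    integrable_phiF h2 (by linarith)
  exact (((hA.comp_sub_right u).add (hA.comp_sub_right v)).const_mul _).add
    ((hB.comp_sub_right u).const_mul _)

lemma G_nonneg (x : ℝ) (hp : 1 < p) (ht0 : 0 < t) (huv : u < v) : 0 ≤ Gfun p t u v x := by
  have hl : 0 < v - u := by linarith
  have h1 : (0:ℝ) ≤ (2/t)^p := rpow_nonneg (by positivity) p
  have h2 : (0:ℝ) ≤ (2^(1+t)*(v-u))^p := rpow_nonneg (by positivity) p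
  have i1 : ∀ z : ℝ, (0:ℝ) ≤ (Icc (-(3*(v-u))) (3*(v-u))).indicator
      (fun z : ℝ => |z| ^ (-(t*p))) z :=
    fun z => indicator_nonneg (fun w _ => rpow_nonneg (abs_nonneg w) _) z
  have i2 : ∀ z : ℝ, (0:ℝ) ≤ {z : ℝ | 2*(v-u) ≤ |z|}.indicator
      (fun z : ℝ => |z| ^ (-((1+t)*p))) z :=
    fun z => indicator_nonneg (fun w _ => rpow_nonneg (abs_nonneg w) _) z
  have := i1 (x - u); have := i1 (x - v); have := i2 (x - u)
  unfold Gfun; positivity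

noncomputable def Kconst (p t : ℝ) : ℝ :=
  (2/t)^p * (4 * 3^(1-t*p)) / (1-t*p) + 2^((1+t)*p) * (2 * 2^(1-(1+t)*p)) / ((1+t)*p-1)

lemma Kconst_pos (hp : 1 < p) (ht0 : 0 < t) (htp : t < 1/p) : 0 < Kconst p t := by
  have h1 := exp1 hp ht0 htp
  have h2 := exp2 hp ht0
  have d1 : 0 < 1 - t*p := by linarith
  have d2 : 0 < (1+t)*p - 1 := by linarith
  have := Real.rpow_pos_of_pos (show (0:ℝ) < 2/t by positivity) p
  have := Real.rpow_pos_of_pos (show (0:ℝ) < 3 by norm_num) (1-t*p)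
  have := Real.rpow_pos_of_pos (show (0:ℝ) < 2 by norm_num) ((1+t)*p)
  have := Real.rpow_pos_of_pos (show (0:ℝ) < 2 by norm_num) (1-(1+t)*p)
  unfold Kconst; positivity

lemma integral_G (hp : 1 < p) (ht0 : 0 < t) (htp : t < 1/p) (huv : u < v) :
    ∫ x, Gfun p t u v x = Kconst p t * (v-u)^(1-t*p) := by
  have hl : 0 < v - u := by linarith
  have h1 := exp1 hp ht0 htp
  have h2 := exp2 hp ht0
  have d1 : 0 < 1 - t*p := by linarith
  have d2 : 0 < (1+t)*p - 1 := by linarith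
  have hA : Integrable ((Icc (-(3*(v-u))) (3*(v-u))).indicator (fun z : ℝ => |z| ^ (-(t*p)))) :=
    integrable_phiN h1 (by linarith)
  have hB : Integrable ({z : ℝ | 2*(v-u) ≤ |z|}.indicator (fun z : ℝ => |z| ^ (-((1+t)*p)))) :=
    integrable_phiF h2 (by linarith)
  unfold Gfun
  have I1 : Integrable (fun x : ℝ => (2/t)^p *
      ((Icc (-(3*(v-u))) (3*(v-u))).indicator (fun z : ℝ => |z| ^ (-(t*p))) (x - u)
      + (Icc (-(3*(v-u))) (3*(v-u))).indicator (fun z : ℝ => |z| ^ (-(t*p))) (x - v))) :=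
    (((hA.comp_sub_right u).add (hA.comp_sub_right v)).const_mul _)
  have I2 : Integrable (fun x : ℝ => (2^(1+t)*(v-u))^p *
      ({z : ℝ | 2*(v-u) ≤ |z|}.indicator (fun z : ℝ => |z| ^ (-((1+t)*p))) (x - u))) :=
    ((hB.comp_sub_right u).const_mul _)
  have I3 : Integrable (fun x : ℝ =>
      (Icc (-(3*(v-u))) (3*(v-u))).indicator (fun z : ℝ => |z| ^ (-(t*p))) (x - u)) :=
    hA.comp_sub_right u
  have I4 : Integrable (fun x : ℝ =>
      (Icc (-(3*(v-u))) (3*(v-u))).indicator (fun z : ℝ => |z| ^ (-(t*p))) (x - v)) :=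
    hA.comp_sub_right v
  rw [integral_add I1 I2, integral_const_mul, integral_const_mul,
    integral_add I3 I4,
    integral_sub_right_eq_self _ u, integral_sub_right_eq_self _ v,
    integral_sub_right_eq_self _ u,
    integral_phiN h1 (by linarith : (0:ℝ) < 3*(v-u)),
    integral_phiF h2 (by linarith : (0:ℝ) < 2*(v-u))]
  have e1 : (3*(v-u)) ^ (-(t*p)+1) = 3^(-(t*p)+1) * (v-u)^(-(t*p)+1) :=
    Real.mul_rpow (by norm_num) hl.le
  have e2 : (2*(v-u)) ^ (-((1+t)*p)+1) = 2^(-((1+t)*p)+1) * (v-u)^(-((1+t)*p)+1) :=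
    Real.mul_rpow (by norm_num) hl.le
  have e3 : (2^(1+t)*(v-u))^p = 2^((1+t)*p) * (v-u)^p := by
    rw [Real.mul_rpow (rpow_nonneg (by norm_num) _) hl.le, ← Real.rpow_mul (by norm_num)]
  have e4 : (v-u)^p * (v-u)^(-((1+t)*p)+1) = (v-u)^(1-t*p) := by
    rw [← Real.rpow_add hl]; ring_nf
  rw [e1, e2, e3]
  have e5 : (-(t*p)+1 : ℝ) = 1-t*p := by ring
  have e6 : (-((1+t)*p)+1 : ℝ) = 1-(1+t)*p := by ring
  rw [e6] at e4
  rw [e5, e6]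
  have hne1 : (1 - t*p) ≠ 0 := ne_of_gt d1
  have hne2 : (1 - (1+t)*p) ≠ 0 := ne_of_lt (by linarith)
  have hne3 : ((1+t)*p - 1) ≠ 0 := ne_of_gt d2
  rw [Kconst]
  set A := (2/t:ℝ)^p with hA1
  set B := (3:ℝ)^(1-t*p) with hB1
  set X := (2:ℝ)^((1+t)*p) with hX1
  set Y := (2:ℝ)^(1-(1+t)*p) with hY1
  set L1 := (v-u)^(1-t*p) with hL1
  set Lp := (v-u)^p with hLp
  set L2 := (v-u)^(1-(1+t)*p) with hL2
  rw [← e4]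
  field_simp
  rw [show (1 - p * (1 + t) : ℝ) = -(p * (1 + t) - 1) by ring, div_neg]
  ring
end G

section dom
variable {p t u v : ℝ}

lemma Dp_le_G (hp : 1 < p) (ht0 : 0 < t) (htp : t < 1/p) (huv : u < v)
    (x : ℝ) (hx_u : x ≠ u) (hx_v : x ≠ v) :
    |∫ y : ℝ, (ind u v (x + y) - ind u v x) * |y| ^ (-(1 + t))| ^ p ≤ Gfun p t u v x := by
  have hl : 0 < v - u := by linarith
  have hp0 : (0:ℝ) ≤ p := by linarith
  have hδ := delta_pos hx_u hx_v
  have hind_nonneg : ∀ z : ℝ, (0:ℝ) ≤ (Icc (-(3*(v-u))) (3*(v-u))).indicator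
      (fun z : ℝ => |z| ^ (-(t*p))) z :=
    fun z => indicator_nonneg (fun w _ => rpow_nonneg (abs_nonneg w) _) z
  have hF_nonneg : ∀ z : ℝ, (0:ℝ) ≤ {z : ℝ | 2*(v-u) ≤ |z|}.indicator
      (fun z : ℝ => |z| ^ (-((1+t)*p))) z :=
    fun z => indicator_nonneg (fun w _ => rpow_nonneg (abs_nonneg w) _) z
  have hc1 : (0:ℝ) ≤ (2/t)^p := rpow_nonneg (by positivity) p
  have hc2 : (0:ℝ) ≤ (2^(1+t)*(v-u))^p := rpow_nonneg (by positivity) p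
  by_cases hnear : |x - u| ≤ 2*(v-u)
  · have hD := absD_le_near hx_u hx_v ht0
    have s1 : |∫ y : ℝ, (ind u v (x + y) - ind u v x) * |y| ^ (-(1 + t))| ^ p
        ≤ ((2/t) * (min |x-u| |x-v|)^(-t)) ^ p :=
      Real.rpow_le_rpow (abs_nonneg _) hD hp0
    have s2 : ((2/t) * (min |x-u| |x-v|)^(-t)) ^ p
        = (2/t)^p * (min |x-u| |x-v|)^(-(t*p)) := by
      rw [Real.mul_rpow (by positivity) (rpow_nonneg (le_min (abs_nonneg _) (abs_nonneg _)) _),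
        ← Real.rpow_mul (le_min (abs_nonneg _) (abs_nonneg _)), neg_mul]
    have s3 : (min |x-u| |x-v|)^(-(t*p)) ≤ |x-u|^(-(t*p)) + |x-v|^(-(t*p)) := by
      rcases min_cases |x-u| |x-v| with ⟨h, _⟩ | ⟨h, _⟩ <;> rw [h]
      · exact le_add_of_nonneg_right (rpow_nonneg (abs_nonneg _) _)
      · exact le_add_of_nonneg_left (rpow_nonneg (abs_nonneg _) _)
    have m1 : x - u ∈ Icc (-(3*(v-u))) (3*(v-u)) :=
      mem_Icc.mp (abs_le.mp (le_trans hnear (by linarith)))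
    have m2 : x - v ∈ Icc (-(3*(v-u))) (3*(v-u)) := by
      have h1 : |x - v| ≤ |x - u| + |v - u| := by
        calc |x - v| = |(x - u) + -(v - u)| := by ring_nf
          _ ≤ |x - u| + |-(v - u)| := abs_add_le _ _
          _ = |x - u| + |v - u| := by rw [abs_neg]
      have h2 : |v - u| = v - u := abs_of_pos hl
      exact mem_Icc.mp (abs_le.mp (by rw [h2] at h1; linarith))
    calc |∫ y : ℝ, (ind u v (x + y) - ind u v x) * |y| ^ (-(1 + t))| ^ p
        ≤ (2/t)^p * (min |x-u| |x-v|)^(-(t*p)) := by rw [← s2]; exact s1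
      _ ≤ (2/t)^p * (|x-u|^(-(t*p)) + |x-v|^(-(t*p))) := mul_le_mul_of_nonneg_left s3 hc1
      _ = (2/t)^p * ((Icc (-(3*(v-u))) (3*(v-u))).indicator (fun z : ℝ => |z| ^ (-(t*p))) (x - u)
          + (Icc (-(3*(v-u))) (3*(v-u))).indicator (fun z : ℝ => |z| ^ (-(t*p))) (x - v)) := by
        rw [indicator_of_mem m1, indicator_of_mem m2]
      _ ≤ Gfun p t u v x := le_add_of_nonneg_right (mul_nonneg hc2 (hF_nonneg _))
  · push_neg at hnear
    have habs : 0 < |x - u| := by linarith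
    have hx : x < u ∨ v < x := by
      rcases lt_or_ge x u with h | h
      · exact Or.inl h
      · right
        have : |x - u| = x - u := abs_of_nonneg (by linarith)
        linarith [this ▸ hnear]
    have hD := absD_le_far huv hx ht0
    have hhalf : |x - u| / 2 ≤ min |x-u| |x-v| := by
      rcases hx with h | h
      · have h1 : |x - u| = u - x := by rw [abs_sub_comm]; exact abs_of_pos (by linarith)
        have h2 : |x - v| = v - x := by rw [abs_sub_comm]; exact abs_of_pos (by linarith)
        refine le_min (by linarith) ?_
        rw [h1, h2]; linarith
      · have h1 : |x - u| = x - u := abs_of_pos (by linarith)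
        have h2 : |x - v| = x - v := abs_of_pos (by linarith)
        refine le_min (by linarith) ?_
        rw [h1, h2]
        rw [h1] at hnear
        linarith
    have hpos2 : 0 < |x - u| / 2 := by linarith
    have s1 : (min |x-u| |x-v|)^(-(1+t)) ≤ (|x-u|/2)^(-(1+t)) :=
      Real.rpow_le_rpow_of_nonpos hpos2 hhalf (by linarith)
    have s2 : (|x-u|/2)^(-(1+t)) = 2^(1+t) * |x-u|^(-(1+t)) := by
      rw [Real.div_rpow (abs_nonneg _) (by norm_num : (0:ℝ) ≤ 2),
        show ((2:ℝ))^(-(1+t)) = (2^(1+t))⁻¹ from Real.rpow_neg (by norm_num) _,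
        div_eq_mul_inv, inv_inv, mul_comm]
    have hD2 : |∫ y : ℝ, (ind u v (x + y) - ind u v x) * |y| ^ (-(1 + t))|
        ≤ (2^(1+t)*(v-u)) * |x-u|^(-(1+t)) := by
      refine hD.trans ?_
      calc (v - u) * (min |x-u| |x-v|)^(-(1+t))
          ≤ (v - u) * ((|x-u|/2)^(-(1+t))) := mul_le_mul_of_nonneg_left s1 hl.le
        _ = (2^(1+t)*(v-u)) * |x-u|^(-(1+t)) := by rw [s2]; ring
    have s3 : |∫ y : ℝ, (ind u v (x + y) - ind u v x) * |y| ^ (-(1 + t))| ^ p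
        ≤ (2^(1+t)*(v-u))^p * |x-u|^(-((1+t)*p)) := by
      have := Real.rpow_le_rpow (abs_nonneg _) hD2 hp0
      refine this.trans (le_of_eq ?_)
      rw [Real.mul_rpow (by positivity) (rpow_nonneg (abs_nonneg _) _),
        ← Real.rpow_mul (abs_nonneg _), neg_mul]
    have m1 : x - u ∈ {z : ℝ | 2*(v-u) ≤ |z|} := le_of_lt hnear
    calc |∫ y : ℝ, (ind u v (x + y) - ind u v x) * |y| ^ (-(1 + t))| ^ p
        ≤ (2^(1+t)*(v-u))^p * |x-u|^(-((1+t)*p)) := s3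
      _ = (2^(1+t)*(v-u))^p *
          ({z : ℝ | 2*(v-u) ≤ |z|}.indicator (fun z : ℝ => |z| ^ (-((1+t)*p))) (x - u)) := by
        rw [Set.indicator_apply, if_pos m1]
      _ ≤ Gfun p t u v x := le_add_of_nonneg_left
          (mul_nonneg hc1 (add_nonneg (hind_nonneg _) (hind_nonneg _)))
end dom

end helpers

/-- The `L^p` norm, as an `ℝ≥0∞`-valued quantity. -/
noncomputable def Np (p : ℝ) (f : ℝ → ℝ) : ℝ≥0∞ :=
  (∫⁻ x : ℝ, ENNReal.ofReal |f x| ^ p) ^ (1 / p)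

/-- For `p > 1` and `0 < t < 1/p` there is a constant `C = C(p,t)`
such that for every interval `J = [u,v] ⊆ [0,1]` of positive length, the function
`D(x) = ∫ (1_J(x+y) − 1_J(x)) |y|^{−1−t} dy` is given by an absolutely convergent
integral at every non-endpoint `x`, and `‖1_J‖_p + ‖D‖_p ≤ C (v−u)^{1/p − t}`. -/
theorem stmt17 (p t : ℝ) (hp : 1 < p) (ht0 : 0 < t) (htp : t < 1 / p) :
    ∃ C : ℝ, 0 < C ∧ ∀ u v : ℝ, u < v → 0 ≤ u → v ≤ 1 →
      (∀ x : ℝ, x ≠ u → x ≠ v →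
        Integrable (fun y : ℝ =>
          ((Set.Icc u v).indicator (fun _ => (1 : ℝ)) (x + y) -
            (Set.Icc u v).indicator (fun _ => (1 : ℝ)) x) * |y| ^ (-(1 + t))) volume) ∧
      Np p ((Set.Icc u v).indicator fun _ => (1 : ℝ)) +
          Np p (fun x : ℝ => ∫ y : ℝ,
            ((Set.Icc u v).indicator (fun _ => (1 : ℝ)) (x + y) -
              (Set.Icc u v).indicator (fun _ => (1 : ℝ)) x) * |y| ^ (-(1 + t)))
        ≤ ENNReal.ofReal (C * (v - u) ^ (1 / p - t)) := by
  have hp0 : (0:ℝ) < p := by linarith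
  have hK := Kconst_pos hp ht0 htp
  refine ⟨1 + (Kconst p t)^(1/p), by positivity, ?_⟩
  intro u v huv hu0 hv1
  have hl : 0 < v - u := by linarith
  have hle1 : v - u ≤ 1 := by linarith
  constructor
  · intro x hxu hxv
    exact integrable_hx hxu hxv ht0
  have hexp : (1 - t*p) * (1/p) = 1/p - t := by field_simp
  have hNp1 : Np p ((Set.Icc u v).indicator fun _ => (1:ℝ))
      ≤ ENNReal.ofReal ((v-u)^(1/p - t)) := by
    have hpt : ∀ x : ℝ, ENNReal.ofReal |(Set.Icc u v).indicator (fun _ => (1:ℝ)) x| ^ p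
        = (Set.Icc u v).indicator (fun _ => (1:ℝ≥0∞)) x := by
      intro x
      by_cases h : x ∈ Set.Icc u v
      · simp [Set.indicator_of_mem h]
      · simp [Set.indicator_of_notMem h, ENNReal.zero_rpow_of_pos hp0]
    unfold Np
    simp_rw [hpt]
    rw [lintegral_indicator measurableSet_Icc, setLIntegral_one, Real.volume_Icc,
      ENNReal.ofReal_rpow_of_nonneg hl.le (by positivity : (0:ℝ) ≤ 1/p)]
    exact ENNReal.ofReal_le_ofReal
      (Real.rpow_le_rpow_of_exponent_ge hl hle1 (by linarith))
  have hNp2 : Np p (fun x : ℝ => ∫ y : ℝ,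
        ((Set.Icc u v).indicator (fun _ => (1:ℝ)) (x + y) -
          (Set.Icc u v).indicator (fun _ => (1:ℝ)) x) * |y| ^ (-(1 + t)))
      ≤ ENNReal.ofReal ((Kconst p t)^(1/p) * (v-u)^(1/p - t)) := by
    have hae : ∀ᵐ x : ℝ, x ≠ u ∧ x ≠ v := by
      have hfin : (volume : Measure ℝ) {u, v} = 0 := (Set.toFinite {u,v}).measure_zero _
      rw [ae_iff]
      convert hfin using 2
      ext x
      simp only [ne_eq, not_and_or, not_not, Set.mem_setOf_eq, Set.mem_insert_iff,
        Set.mem_singleton_iff]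
    have step1 : (∫⁻ x : ℝ, ENNReal.ofReal
        |∫ y : ℝ, ((Set.Icc u v).indicator (fun _ => (1:ℝ)) (x + y) -
          (Set.Icc u v).indicator (fun _ => (1:ℝ)) x) * |y| ^ (-(1 + t))| ^ p)
        ≤ ENNReal.ofReal (Kconst p t * (v-u)^(1-t*p)) := by
      have le1 : (∫⁻ x : ℝ, ENNReal.ofReal
          |∫ y : ℝ, ((Set.Icc u v).indicator (fun _ => (1:ℝ)) (x + y) -
            (Set.Icc u v).indicator (fun _ => (1:ℝ)) x) * |y| ^ (-(1 + t))| ^ p)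
          ≤ ∫⁻ x : ℝ, ENNReal.ofReal (Gfun p t u v x) := by
        refine lintegral_mono_ae ?_
        filter_upwards [hae] with x hx
        rw [ENNReal.ofReal_rpow_of_nonneg (abs_nonneg _) hp0.le]
        exact ENNReal.ofReal_le_ofReal (Dp_le_G hp ht0 htp huv x hx.1 hx.2)
      refine le1.trans (le_of_eq ?_)
      rw [← ofReal_integral_eq_lintegral_ofReal (integrable_G hp ht0 htp huv)
        (ae_of_all _ (fun x => G_nonneg x hp ht0 huv)),
        integral_G hp ht0 htp huv]
    calc Np p (fun x : ℝ => ∫ y : ℝ,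
          ((Set.Icc u v).indicator (fun _ => (1:ℝ)) (x + y) -
            (Set.Icc u v).indicator (fun _ => (1:ℝ)) x) * |y| ^ (-(1 + t)))
        ≤ (ENNReal.ofReal (Kconst p t * (v-u)^(1-t*p))) ^ (1/p) :=
          ENNReal.rpow_le_rpow step1 (by positivity)
      _ = ENNReal.ofReal ((Kconst p t * (v-u)^(1-t*p))^(1/p)) :=
          ENNReal.ofReal_rpow_of_nonneg (by positivity) (by positivity)
      _ = ENNReal.ofReal ((Kconst p t)^(1/p) * (v-u)^(1/p - t)) := by
          rw [Real.mul_rpow hK.le (Real.rpow_nonneg hl.le _), ← Real.rpow_mul hl.le, hexp]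
  calc Np p ((Set.Icc u v).indicator fun _ => (1:ℝ)) +
        Np p (fun x : ℝ => ∫ y : ℝ,
          ((Set.Icc u v).indicator (fun _ => (1:ℝ)) (x + y) -
            (Set.Icc u v).indicator (fun _ => (1:ℝ)) x) * |y| ^ (-(1 + t)))
      ≤ ENNReal.ofReal ((v-u)^(1/p - t))
        + ENNReal.ofReal ((Kconst p t)^(1/p) * (v-u)^(1/p - t)) := add_le_add hNp1 hNp2
    _ = ENNReal.ofReal ((1 + (Kconst p t)^(1/p)) * (v - u) ^ (1/p - t)) := by
        rw [← ENNReal.ofReal_add (by positivity) (by positivity)]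
        congr 1
        ring
end

section
/- Let I = [0,1], let I_1, …, I_N be pairwise disjoint open subintervals of I whose union is I up to a Lebesgue-null set, and let T: I → I be a map whose restriction to each I_i extends to a C¹ diffeomorphism of the closure of I_i onto its image with inf_{I_i} |T′| > 0. Let ξ_i := (T|_{I_i})^{−1} and define the transfer operator (L f)(x) := ∑_{i=1}^{N} 1_{T(I_i)}(x) f(ξ_i(x)) |ξ_i′(x)|. Suppose every point of [0,1] belongs to at most M of the closures of the images T(I_1), …, T(I_N). Then for every 1 ≤ p < ∞ and every f ∈ L^p(I, Lebesgue), ‖L f‖_{L^p} ≤ M^{1−1/p} (sup_{x} |T′(x)|^{−1})^{1−1/p} ‖f‖_{L^p}, where the supremum is over the union of the intervals I_i. -/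
open MeasureTheory
open scoped ENNReal

lemma stmt18_jensen {n : ℕ} (z : Fin n → ℝ≥0∞) (S : Finset (Fin n))
    (hz : ∀ i ∉ S, z i = 0) (M : ℕ) (hS : S.card ≤ M) (p : ℝ) (hp : 1 ≤ p) :
    (∑ i, z i) ^ p ≤ (M : ℝ≥0∞) ^ (p - 1) * ∑ i, z i ^ p := by
  have hp0 : (0:ℝ) < p := lt_of_lt_of_le one_pos hp
  have hsum : ∑ i, z i = ∑ i ∈ S, z i :=
    (Finset.sum_subset S.subset_univ (fun i _ hi => hz i hi)).symm
  rcases S.eq_empty_or_nonempty with hS0 | hSne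
  · rw [hsum, hS0]
    simp [ENNReal.zero_rpow_of_pos hp0]
  · have hcard : (0:ℕ) < S.card := Finset.card_pos.2 hSne
    have hn0 : ((S.card : ℝ≥0∞)) ≠ 0 := by
      exact_mod_cast Nat.pos_iff_ne_zero.1 hcard
    have hnt : ((S.card : ℝ≥0∞)) ≠ ⊤ := ENNReal.natCast_ne_top _
    set c : ℝ≥0∞ := ((S.card : ℝ≥0∞))⁻¹ with hc
    have hw : ∑ _i ∈ S, c = 1 := by
      rw [Finset.sum_const, nsmul_eq_mul, hc, ENNReal.mul_inv_cancel hn0 hnt]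
    have key := ENNReal.rpow_arith_mean_le_arith_mean_rpow S (fun _ => c) z hw hp
    have h1 : ∑ i ∈ S, z i = (S.card : ℝ≥0∞) * ∑ i ∈ S, c * z i := by
      rw [← Finset.mul_sum, ← mul_assoc, ENNReal.mul_inv_cancel hn0 hnt, one_mul]
    calc (∑ i, z i) ^ p = ((S.card : ℝ≥0∞) * ∑ i ∈ S, c * z i) ^ p := by rw [hsum, h1]
      _ = (S.card : ℝ≥0∞) ^ p * (∑ i ∈ S, c * z i) ^ p :=
          ENNReal.mul_rpow_of_nonneg _ _ hp0.le
      _ ≤ (S.card : ℝ≥0∞) ^ p * ∑ i ∈ S, c * z i ^ p := mul_le_mul' le_rfl key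
      _ = (S.card : ℝ≥0∞) ^ p * (c * ∑ i ∈ S, z i ^ p) := by
          rw [show ∑ i ∈ S, c * z i ^ p = c * ∑ i ∈ S, z i ^ p from (Finset.mul_sum _ _ _).symm]
      _ = ((S.card : ℝ≥0∞) ^ p * c) * ∑ i ∈ S, z i ^ p := by rw [mul_assoc]
      _ = (S.card : ℝ≥0∞) ^ (p - 1) * ∑ i ∈ S, z i ^ p := by
          rw [hc, ← ENNReal.rpow_neg_one, ← ENNReal.rpow_add _ _ hn0 hnt, sub_eq_add_neg]
      _ ≤ (M : ℝ≥0∞) ^ (p - 1) * ∑ i, z i ^ p :=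
          mul_le_mul' (ENNReal.rpow_le_rpow (by exact_mod_cast hS) (by linarith))
            (Finset.sum_le_sum_of_subset S.subset_univ)

/-- `L^p` bound for the Perron–Frobenius (transfer) operator of a
finite-branched piecewise `C¹` expanding map `T` of `I = [0,1]`: if every point lies in
at most `M` of the closures of the images of the branches, then for `1 ≤ p < ∞` and any
upper bound `s` for `|T'|⁻¹` on the branches,
`‖L f‖_{L^p} ≤ M^{1−1/p} s^{1−1/p} ‖f‖_{L^p}`. -/
theorem stmt18 (N : ℕ) (hN : 0 < N) (a b : Fin N → ℝ)
    (hab : ∀ i, a i < b i) (ha0 : ∀ i, 0 ≤ a i) (hb1 : ∀ i, b i ≤ 1)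
    (hdisj : ∀ i j, i ≠ j → Disjoint (Set.Ioo (a i) (b i)) (Set.Ioo (a j) (b j)))
    (hcover : volume (Set.Icc (0 : ℝ) 1 \ ⋃ i, Set.Ioo (a i) (b i)) = 0)
    (T T' : ℝ → ℝ)
    (hmaps : ∀ x ∈ Set.Icc (0 : ℝ) 1, T x ∈ Set.Icc (0 : ℝ) 1)
    (hderiv : ∀ i, ∀ x ∈ Set.Icc (a i) (b i),
      HasDerivWithinAt T (T' x) (Set.Icc (a i) (b i)) x)
    (hTcont : ∀ i, ContinuousOn T' (Set.Icc (a i) (b i)))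
    (hinj : ∀ i, Set.InjOn T (Set.Icc (a i) (b i)))
    (hlow : ∀ i, ∃ m : ℝ, 0 < m ∧ ∀ x ∈ Set.Icc (a i) (b i), m ≤ |T' x|)
    (ξ ξ' : Fin N → ℝ → ℝ)
    (hξ : ∀ i, ∀ x ∈ Set.Icc (a i) (b i), ξ i (T x) = x)
    (hξT : ∀ i, ∀ y ∈ T '' Set.Ioo (a i) (b i), T (ξ i y) = y)
    (hξd : ∀ i, ∀ y ∈ T '' Set.Ioo (a i) (b i),
      HasDerivWithinAt (ξ i) (ξ' i y) (T '' Set.Icc (a i) (b i)) y)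
    (L : (ℝ → ℝ) → ℝ → ℝ)
    (hL : L = fun f x =>
      ∑ i, (T '' Set.Ioo (a i) (b i)).indicator (fun y => f (ξ i y) * |ξ' i y|) x)
    (M : ℕ)
    (hM : ∀ x : ℝ, Set.ncard {i : Fin N | x ∈ closure (T '' Set.Ioo (a i) (b i))} ≤ M)
    (p : ℝ) (hp : 1 ≤ p)
    (f : ℝ → ℝ)
    (hf : MemLp f (ENNReal.ofReal p) (volume.restrict (Set.Icc (0 : ℝ) 1)))
    (s : ℝ) (hs : ∀ i, ∀ x ∈ Set.Ioo (a i) (b i), |T' x|⁻¹ ≤ s) :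
    eLpNorm (L f) (ENNReal.ofReal p) (volume.restrict (Set.Icc (0 : ℝ) 1))
      ≤ ENNReal.ofReal ((M : ℝ) ^ (1 - 1 / p) * s ^ (1 - 1 / p)) *
        eLpNorm f (ENNReal.ofReal p) (volume.restrict (Set.Icc (0 : ℝ) 1)) := by
  classical
  have hp0 : (0:ℝ) < p := lt_of_lt_of_le one_pos hp
  set μ := volume.restrict (Set.Icc (0:ℝ) 1) with hμ
  set q := ENNReal.ofReal p with hq
  have hq0 : q ≠ 0 := by
    rw [hq, Ne, ENNReal.ofReal_eq_zero]; linarith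
  have hqt : q ≠ ⊤ := ENNReal.ofReal_ne_top
  have hqp : q.toReal = p := ENNReal.toReal_ofReal hp0.le
  set I : Fin N → Set ℝ := fun i => Set.Ioo (a i) (b i) with hIdef
  set A : Fin N → Set ℝ := fun i => T '' Set.Ioo (a i) (b i) with hAdef
  have hIsub : ∀ i, I i ⊆ Set.Icc (a i) (b i) := fun i => Set.Ioo_subset_Icc_self
  have hI01 : ∀ i, I i ⊆ Set.Icc (0:ℝ) 1 := fun i x hx =>
    ⟨le_trans (ha0 i) (le_of_lt hx.1), le_trans (le_of_lt hx.2) (hb1 i)⟩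
  have hImeas : ∀ i, MeasurableSet (I i) := fun i => measurableSet_Ioo
  have hTfd : ∀ i, ∀ x ∈ I i,
      HasFDerivWithinAt T ((1 : ℝ →L[ℝ] ℝ).smulRight (T' x)) (I i) x :=
    fun i x hx => ((hderiv i x (hIsub i hx)).mono (hIsub i)).hasFDerivWithinAt
  have hTinj : ∀ i, Set.InjOn T (I i) := fun i => (hinj i).mono (hIsub i)
  have hAmeas : ∀ i, MeasurableSet (A i) := fun i =>
    measurable_image_of_fderivWithin (hImeas i) (hTfd i) (hTinj i)
  have hT'ne : ∀ i, ∀ x ∈ Set.Icc (a i) (b i), T' x ≠ 0 := by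
    intro i x hx h0
    obtain ⟨m, hm, hmle⟩ := hlow i
    have := hmle x hx
    rw [h0, abs_zero] at this
    linarith
  have hchain : ∀ i, ∀ x ∈ I i, ξ' i (T x) = (T' x)⁻¹ := by
    intro i x hx
    have hxI : x ∈ Set.Icc (a i) (b i) := hIsub i hx
    have hTx : T x ∈ A i := ⟨x, hx, rfl⟩
    have h1 : HasDerivWithinAt (ξ i ∘ T) (ξ' i (T x) * T' x) (Set.Icc (a i) (b i)) x :=
      (hξd i _ hTx).comp x (hderiv i x hxI) (Set.mapsTo_image T _)
    have h2 : HasDerivWithinAt id (ξ' i (T x) * T' x) (Set.Icc (a i) (b i)) x :=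
      h1.congr (fun y hy => (hξ i y hy).symm) (hξ i x hxI).symm
    have hud : UniqueDiffWithinAt ℝ (Set.Icc (a i) (b i)) x := uniqueDiffOn_Icc (hab i) x hxI
    have e1 := h2.derivWithin hud
    have e2 := (hasDerivWithinAt_id x (Set.Icc (a i) (b i))).derivWithin hud
    have hmul : ξ' i (T x) * T' x = 1 := by rw [← e1, e2]
    exact eq_inv_of_mul_eq_one_left hmul
  have hξmem : ∀ i, ∀ y ∈ A i, ξ i y ∈ I i := by
    rintro i y ⟨x, hx, rfl⟩
    rw [hξ i x (hIsub i hx)]; exact hx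
  have hξd' : ∀ i, ∀ y ∈ A i, ξ' i y = (T' (ξ i y))⁻¹ := by
    rintro i y ⟨x, hx, rfl⟩
    rw [hξ i x (hIsub i hx)]; exact hchain i x hx
  have hξcont : ∀ i, ContinuousOn (ξ i) (A i) := fun i y hy =>
    ((hξd i y hy).continuousWithinAt).mono (Set.image_mono (hIsub i))
  have hCOV : ∀ i (h : ℝ → ℝ≥0∞),
      ∫⁻ y in A i, h y = ∫⁻ x in I i, ENNReal.ofReal |T' x| * h (T x) := by
    intro i h
    simpa only [ContinuousLinearMap.smulRight_one_eq_toSpanSingleton, ContinuousLinearMap.det_toSpanSingleton] using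
      lintegral_image_eq_lintegral_abs_det_fderiv_mul volume (hImeas i) (hTfd i) (hTinj i) h
  have hs0 : 0 ≤ s := by
    set i0 : Fin N := ⟨0, hN⟩
    have hmid : (a i0 + b i0)/2 ∈ I i0 := ⟨by have := hab i0; linarith, by have := hab i0; linarith⟩
    exact le_trans (inv_nonneg.2 (abs_nonneg _)) (hs i0 _ hmid)
  -- measurable representative
  obtain ⟨g, hgsm, hfg⟩ := hf.1
  have hgm : Measurable g := hgsm.measurable
  set D := toMeasurable μ {x | f x ≠ g x} with hDdef
  have hDm : MeasurableSet D := measurableSet_toMeasurable _ _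
  have hDnull : μ D = 0 := by
    rw [hDdef, measure_toMeasurable]
    exact hfg
  have hDvol : volume (D ∩ Set.Icc (0:ℝ) 1) = 0 := by
    rwa [hμ, Measure.restrict_apply hDm] at hDnull
  have himnull : ∀ i, volume (T '' (D ∩ I i)) = 0 := by
    intro i
    have hsubI : D ∩ I i ⊆ I i := Set.inter_subset_right
    have hmeasDI : MeasurableSet (D ∩ I i) := hDm.inter (hImeas i)
    have h0 : volume (D ∩ I i) = 0 :=
      measure_mono_null (fun x hx => Set.mem_inter hx.1 (hI01 i hx.2)) hDvol
    have hcov := lintegral_image_eq_lintegral_abs_det_fderiv_mul volume hmeasDI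
      (fun x hx => (hTfd i x hx.2).mono hsubI) ((hTinj i).mono hsubI) (fun _ => (1:ℝ≥0∞))
    rw [← setLIntegral_one, hcov]
    exact setLIntegral_measure_zero _ _ h0
  have hLae : L f =ᵐ[μ] L g := by
    have hsub : {x | L f x ≠ L g x} ⊆ ⋃ i, T '' (D ∩ I i) := by
      intro x hx
      by_contra hnot
      apply hx
      show L f x = L g x
      rw [hL]
      refine Finset.sum_congr rfl (fun i _ => ?_)
      by_cases hxA : x ∈ A i
      · rw [Set.indicator_of_mem hxA, Set.indicator_of_mem hxA]
        have hfgx : f (ξ i x) = g (ξ i x) := by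
          by_contra hne
          exact hnot (Set.mem_iUnion.2
            ⟨i, ⟨ξ i x, ⟨subset_toMeasurable _ _ hne, hξmem i x hxA⟩, hξT i x hxA⟩⟩)
        rw [hfgx]
      · rw [Set.indicator_of_notMem hxA, Set.indicator_of_notMem hxA]
    have hznull : μ (⋃ i, T '' (D ∩ I i)) = 0 := by
      refine measure_iUnion_null (fun i => ?_)
      have himm : MeasurableSet (T '' (D ∩ I i)) :=
        measurable_image_of_fderivWithin (hDm.inter (hImeas i))
          (fun x hx => (hTfd i x hx.2).mono Set.inter_subset_right)
          ((hTinj i).mono Set.inter_subset_right)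
      rw [hμ, Measure.restrict_apply himm]
      exact measure_mono_null Set.inter_subset_left (himnull i)
    exact ae_iff.2 (measure_mono_null hsub hznull)
  rw [eLpNorm_congr_ae hLae, eLpNorm_congr_ae hfg]
  -- main estimate for the measurable representative g
  set F : Fin N → ℝ → ℝ≥0∞ := fun i =>
    (A i).indicator (fun y => ((‖g (ξ i y)‖₊ : ℝ≥0∞)) * ENNReal.ofReal |ξ' i y|) with hFdef
  have hFmeas : ∀ i, AEMeasurable (F i) volume := by
    intro i
    refine (aemeasurable_indicator_iff (hAmeas i)).2 ?_
    have hξa : AEMeasurable (ξ i) (volume.restrict (A i)) :=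
      (hξcont i).aemeasurable (hAmeas i)
    have h1 : AEMeasurable (fun y => ((‖g (ξ i y)‖₊ : ℝ≥0∞))) (volume.restrict (A i)) :=
      (measurable_coe_nnreal_ennreal.comp (measurable_nnnorm.comp hgm)).comp_aemeasurable hξa
    have h2 : AEMeasurable (fun y => ENNReal.ofReal |ξ' i y|) (volume.restrict (A i)) := by
      have hT'ξ : ContinuousOn (fun y => T' (ξ i y)) (A i) :=
        (hTcont i).comp (hξcont i) (fun y hy => hIsub i (hξmem i y hy))
      have h3 : AEMeasurable (fun y => ENNReal.ofReal |(T' (ξ i y))⁻¹|)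
          (volume.restrict (A i)) :=
        (ENNReal.measurable_ofReal.comp (measurable_abs.comp measurable_inv)).comp_aemeasurable
          (hT'ξ.aemeasurable (hAmeas i))
      refine h3.congr ?_
      filter_upwards [self_mem_ae_restrict (hAmeas i)] with y hy
      rw [hξd' i y hy]
    exact h1.mul h2
  have hpt : ∀ x, ((‖L g x‖₊ : ℝ≥0∞)) ^ p ≤ (M:ℝ≥0∞) ^ (p-1) * ∑ i, F i x ^ p := by
    intro x
    have h1 : ((‖L g x‖₊ : ℝ≥0∞)) ≤ ∑ i, F i x := by
      rw [hL]
      calc ((‖∑ i, (A i).indicator (fun y => g (ξ i y) * |ξ' i y|) x‖₊ : ℝ≥0∞))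
          ≤ ∑ i, ((‖(A i).indicator (fun y => g (ξ i y) * |ξ' i y|) x‖₊ : ℝ≥0∞)) := by
            rw [← ENNReal.coe_finset_sum]
            exact ENNReal.coe_le_coe.2 (nnnorm_sum_le _ _)
        _ ≤ ∑ i, F i x := by
            refine Finset.sum_le_sum (fun i _ => ?_)
            by_cases hxA : x ∈ A i
            · rw [Set.indicator_of_mem hxA, hFdef]
              simp only
              rw [Set.indicator_of_mem hxA, nnnorm_mul, ENNReal.coe_mul,
                (by exact Real.enorm_eq_ofReal_abs (|ξ' i x|) : ((‖|ξ' i x|‖₊ : ℝ≥0∞)) = ENNReal.ofReal |(|ξ' i x|)|), abs_abs]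
            · rw [Set.indicator_of_notMem hxA, hFdef]
              simp only
              rw [Set.indicator_of_notMem hxA]
              simp
    calc ((‖L g x‖₊ : ℝ≥0∞)) ^ p ≤ (∑ i, F i x) ^ p := ENNReal.rpow_le_rpow h1 hp0.le
      _ ≤ (M:ℝ≥0∞) ^ (p-1) * ∑ i, F i x ^ p := by
          refine stmt18_jensen (fun i => F i x)
            (Finset.univ.filter (fun i => x ∈ closure (A i))) ?_ M ?_ p hp
          · intro i hi
            simp only [Finset.mem_filter, Finset.mem_univ, true_and] at hi
            have hxA : x ∉ A i := fun h => hi (subset_closure h)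
            simp only [hFdef]
            rw [Set.indicator_of_notMem hxA]
          · have hcardeq : (Finset.univ.filter (fun i => x ∈ closure (A i))).card
                = Set.ncard {i : Fin N | x ∈ closure (A i)} := by
              rw [Set.ncard_eq_toFinset_card']
              congr 1
              ext i
              simp
            rw [hcardeq]
            exact hM x
  have hbranch : ∀ i, ∫⁻ x, F i x ^ p ∂μ
      ≤ ENNReal.ofReal s ^ (p-1) * ∫⁻ x in I i, ((‖g x‖₊ : ℝ≥0∞)) ^ p := by
    intro i
    have step2 : (fun x => F i x ^ p)
        = (A i).indicator (fun y => (((‖g (ξ i y)‖₊ : ℝ≥0∞)) * ENNReal.ofReal |ξ' i y|) ^ p) := by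
      funext x
      by_cases hxA : x ∈ A i
      · simp only [hFdef, Set.indicator_of_mem hxA]
      · simp only [hFdef, Set.indicator_of_notMem hxA]
        exact ENNReal.zero_rpow_of_pos hp0
    have hptw : ∀ y ∈ A i,
        (((‖g (ξ i y)‖₊ : ℝ≥0∞)) * ENNReal.ofReal |ξ' i y|) ^ p
          ≤ ENNReal.ofReal s ^ (p-1) * (((‖g (ξ i y)‖₊ : ℝ≥0∞)) ^ p * ENNReal.ofReal |ξ' i y|) := by
      intro y hy
      set u : ℝ≥0∞ := ((‖g (ξ i y)‖₊ : ℝ≥0∞)) with hu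
      set v : ℝ≥0∞ := ENNReal.ofReal |ξ' i y| with hv
      have hξIcc : ξ i y ∈ Set.Icc (a i) (b i) := hIsub i (hξmem i y hy)
      have hT'ξne : T' (ξ i y) ≠ 0 := hT'ne i _ hξIcc
      have habs : |ξ' i y| = |T' (ξ i y)|⁻¹ := by rw [hξd' i y hy, abs_inv]
      have hξ'pos : 0 < |ξ' i y| := by
        rw [habs]
        exact inv_pos.2 (abs_pos.2 hT'ξne)
      have hv0 : v ≠ 0 := by
        rw [hv, Ne, ENNReal.ofReal_eq_zero]
        linarith
      have hvt : v ≠ ⊤ := ENNReal.ofReal_ne_top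
      have hvle : v ≤ ENNReal.ofReal s := by
        rw [hv]
        refine ENNReal.ofReal_le_ofReal ?_
        rw [habs]
        exact hs i _ (hξmem i y hy)
      calc (u * v) ^ p = u ^ p * v ^ p := ENNReal.mul_rpow_of_nonneg _ _ hp0.le
        _ = u ^ p * (v ^ (p-1) * v ^ (1:ℝ)) := by
            rw [← ENNReal.rpow_add _ _ hv0 hvt]
            norm_num
        _ ≤ u ^ p * (ENNReal.ofReal s ^ (p-1) * v ^ (1:ℝ)) := by
            refine mul_le_mul' le_rfl (mul_le_mul' ?_ le_rfl)
            exact ENNReal.rpow_le_rpow hvle (by linarith)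
        _ = ENNReal.ofReal s ^ (p-1) * (u ^ p * v) := by rw [ENNReal.rpow_one]; ring
    have hCOVi : ∫⁻ y in A i, ((‖g (ξ i y)‖₊ : ℝ≥0∞)) ^ p * ENNReal.ofReal |ξ' i y|
        = ∫⁻ x in I i, ((‖g x‖₊ : ℝ≥0∞)) ^ p := by
      rw [hCOV i (fun y => ((‖g (ξ i y)‖₊ : ℝ≥0∞)) ^ p * ENNReal.ofReal |ξ' i y|)]
      refine lintegral_congr_ae ?_
      filter_upwards [self_mem_ae_restrict (hImeas i)] with x hx
      have hxIcc : x ∈ Set.Icc (a i) (b i) := hIsub i hx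
      rw [hξ i x hxIcc, hchain i x hx, abs_inv,
        ← mul_assoc, mul_comm (ENNReal.ofReal |T' x|), mul_assoc,
        ← ENNReal.ofReal_mul (abs_nonneg _), mul_inv_cancel₀ (abs_ne_zero.2 (hT'ne i x hxIcc))]
      simp
    calc ∫⁻ x, F i x ^ p ∂μ ≤ ∫⁻ x, F i x ^ p := lintegral_mono' Measure.restrict_le_self le_rfl
      _ = ∫⁻ y in A i, (((‖g (ξ i y)‖₊ : ℝ≥0∞)) * ENNReal.ofReal |ξ' i y|) ^ p := by
          rw [step2, lintegral_indicator (hAmeas i)]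
      _ ≤ ∫⁻ y in A i, ENNReal.ofReal s ^ (p-1)
            * (((‖g (ξ i y)‖₊ : ℝ≥0∞)) ^ p * ENNReal.ofReal |ξ' i y|) := by
          refine lintegral_mono_ae ?_
          filter_upwards [self_mem_ae_restrict (hAmeas i)] with y hy
          exact hptw y hy
      _ = ENNReal.ofReal s ^ (p-1)
            * ∫⁻ y in A i, ((‖g (ξ i y)‖₊ : ℝ≥0∞)) ^ p * ENNReal.ofReal |ξ' i y| :=
          lintegral_const_mul' _ _ (ENNReal.rpow_ne_top_of_nonneg (by linarith) ENNReal.ofReal_ne_top)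
      _ = ENNReal.ofReal s ^ (p-1) * ∫⁻ x in I i, ((‖g x‖₊ : ℝ≥0∞)) ^ p := by rw [hCOVi]
  have hsum2 : ∑ i, ∫⁻ x in I i, ((‖g x‖₊ : ℝ≥0∞)) ^ p
      ≤ ∫⁻ x in Set.Icc (0:ℝ) 1, ((‖g x‖₊ : ℝ≥0∞)) ^ p := by
    have hdisj' : Pairwise (Function.onFun Disjoint I) := fun i j hij => hdisj i j hij
    have hiu := lintegral_iUnion (μ := volume) hImeas hdisj' (fun x => ((‖g x‖₊ : ℝ≥0∞)) ^ p)
    rw [tsum_fintype] at hiu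
    rw [← hiu]
    exact lintegral_mono_set (Set.iUnion_subset hI01)
  have hmain : ∫⁻ x, ((‖L g x‖₊ : ℝ≥0∞)) ^ p ∂μ
      ≤ (M:ℝ≥0∞) ^ (p-1) * (ENNReal.ofReal s ^ (p-1) * ∫⁻ x, ((‖g x‖₊ : ℝ≥0∞)) ^ p ∂μ) := by
    calc ∫⁻ x, ((‖L g x‖₊ : ℝ≥0∞)) ^ p ∂μ
        ≤ ∫⁻ x, (M:ℝ≥0∞) ^ (p-1) * ∑ i, F i x ^ p ∂μ := lintegral_mono hpt
      _ = (M:ℝ≥0∞) ^ (p-1) * ∫⁻ x, ∑ i, F i x ^ p ∂μ :=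
          lintegral_const_mul' _ _
            (ENNReal.rpow_ne_top_of_nonneg (by linarith) (ENNReal.natCast_ne_top M))
      _ = (M:ℝ≥0∞) ^ (p-1) * ∑ i, ∫⁻ x, F i x ^ p ∂μ := by
          rw [lintegral_finset_sum' _ (fun i _ =>
            ((hFmeas i).mono_measure Measure.restrict_le_self).pow_const p)]
      _ ≤ (M:ℝ≥0∞) ^ (p-1)
            * ∑ i, (ENNReal.ofReal s ^ (p-1) * ∫⁻ x in I i, ((‖g x‖₊ : ℝ≥0∞)) ^ p) :=
          mul_le_mul' le_rfl (Finset.sum_le_sum (fun i _ => hbranch i))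
      _ = (M:ℝ≥0∞) ^ (p-1)
            * (ENNReal.ofReal s ^ (p-1) * ∑ i, ∫⁻ x in I i, ((‖g x‖₊ : ℝ≥0∞)) ^ p) := by
          rw [← Finset.mul_sum]
      _ ≤ (M:ℝ≥0∞) ^ (p-1) * (ENNReal.ofReal s ^ (p-1) * ∫⁻ x, ((‖g x‖₊ : ℝ≥0∞)) ^ p ∂μ) := by
          exact mul_le_mul' le_rfl (mul_le_mul' le_rfl hsum2)
  rw [eLpNorm_eq_lintegral_rpow_enorm_toReal hq0 hqt, eLpNorm_eq_lintegral_rpow_enorm_toReal hq0 hqt, hqp]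
  have hfinal := ENNReal.rpow_le_rpow hmain (le_of_lt (by positivity : (0:ℝ) < 1/p))
  refine le_trans hfinal ?_
  have he : (p-1) * (1/p) = 1 - 1/p := by field_simp
  have h1p : (0:ℝ) ≤ 1 - 1/p := by
    rw [sub_nonneg, div_le_one hp0]; linarith
  rw [ENNReal.mul_rpow_of_nonneg _ _ (by positivity : (0:ℝ) ≤ 1/p),
    ENNReal.mul_rpow_of_nonneg _ _ (by positivity : (0:ℝ) ≤ 1/p),
    ← ENNReal.rpow_mul (M:ℝ≥0∞), ← ENNReal.rpow_mul (ENNReal.ofReal s), he,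
    ENNReal.ofReal_mul (by positivity : (0:ℝ) ≤ (M:ℝ) ^ (1 - 1/p)),
    ← ENNReal.ofReal_rpow_of_nonneg (Nat.cast_nonneg M) h1p,
    ← ENNReal.ofReal_rpow_of_nonneg hs0 h1p,
    ENNReal.ofReal_natCast, ← mul_assoc]
  exact le_rfl
end
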